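/- The degree-1 arc-cosine function κ₁(u) = (√(1−u²) + u(π − arccos(u)))/π satisfies, as t → 0⁺, the asymptotic expansions κ₁(1−t) = 1 − t + (2√2/(3π)) t^{3/2} + O(t^{5/2}) and κ₁(−1+t) = (2√2/(3π)) t^{3/2} + O(t^{5/2}). -/

import Mathlib

open Filter Asymptotics Real Set Topology

/-- The degree-0 arc-cosine function `κ₀(u) = 1 - arccos(u)/π`. -/
noncomputable def kappa0 (u : ℝ) : ℝ := 1 - Real.arccos u / Real.pi

/-- The degree-1 arc-cosine function `κ₁(u) = (√(1-u²) + u(π - arccos u))/π`. -/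
noncomputable def kappa1 (u : ℝ) : ℝ :=
  (Real.sqrt (1 - u ^ 2) + u * (Real.pi - Real.arccos u)) / Real.pi

lemma kappa1_symm (t : ℝ) : kappa1 (1 - t) = 1 - t + kappa1 (-1 + t) := by
  simp only [kappa1]
  rw [show (-1 : ℝ) + t = -(1 - t) by ring, Real.arccos_neg,
    show (1 : ℝ) - (-(1 - t)) ^ 2 = 1 - (1 - t) ^ 2 by ring]
  field_simp
  ring

lemma g_hasDerivAt (s : ℝ) :
    HasDerivAt (fun x : ℝ => Real.sin x - x * Real.cos x - 8 / 3 * Real.sin (x / 2) ^ 3)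
      (2 * Real.sin (s / 2) * Real.cos (s / 2) * (s - 2 * Real.sin (s / 2))) s := by
  have h1 : HasDerivAt Real.sin (Real.cos s) s := Real.hasDerivAt_sin s
  have h2 : HasDerivAt (fun x : ℝ => x * Real.cos x) (1 * Real.cos s + s * (-Real.sin s)) s :=
    (hasDerivAt_id s).mul (Real.hasDerivAt_cos s)
  have h3 : HasDerivAt (fun x : ℝ => x / 2) (1 / 2) s := (hasDerivAt_id s).div_const 2
  have h4 := ((h3.sin).pow 3).const_mul (8 / 3 : ℝ)
  have h5 := (h1.sub h2).sub h4
  refine h5.congr_deriv ?_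
  have hsin : Real.sin s = 2 * Real.sin (s / 2) * Real.cos (s / 2) := by
    rw [← Real.sin_two_mul]; ring_nf
  rw [hsin]; push_cast; ring

lemma g_bound {θ : ℝ} (h0 : 0 ≤ θ) (h1 : θ ≤ 1) :
    |Real.sin θ - θ * Real.cos θ - 8 / 3 * Real.sin (θ / 2) ^ 3| ≤ θ ^ 5 := by
  have key := norm_image_sub_le_of_norm_deriv_le_segment'
    (f := fun x : ℝ => Real.sin x - x * Real.cos x - 8 / 3 * Real.sin (x / 2) ^ 3)
    (f' := fun s => 2 * Real.sin (s / 2) * Real.cos (s / 2) * (s - 2 * Real.sin (s / 2)))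
    (a := 0) (b := θ) (C := θ ^ 4)
    (fun x _ => (g_hasDerivAt x).hasDerivWithinAt)
    (fun s hs => ?_) θ (right_mem_Icc.2 h0)
  · simpa [← pow_succ] using key
  · obtain ⟨hs0, hsθ⟩ := hs
    have hsθ' : s ≤ θ := hsθ.le
    have hs1 : s ≤ 1 := hsθ'.trans h1
    have hA : |Real.sin (s / 2)| ≤ s / 2 := by
      calc |Real.sin (s / 2)| ≤ |s / 2| := Real.abs_sin_le_abs
        _ = s / 2 := abs_of_nonneg (by positivity)
    have hb := Real.sin_bound (x := s / 2) (by rw [abs_of_nonneg (by positivity)]; linarith)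
    rw [abs_of_nonneg (by positivity : (0:ℝ) ≤ s / 2)] at hb
    have hB : |s - 2 * Real.sin (s / 2)| ≤ 37 / 768 * s ^ 3 := by
      rw [abs_le] at hb ⊢
      constructor <;> nlinarith [pow_nonneg hs0 3, pow_nonneg hs0 4, sq_nonneg s,
        mul_nonneg (pow_nonneg hs0 3) (by linarith : (0:ℝ) ≤ 1 - s)]
    have hC : |Real.cos (s / 2)| ≤ 1 := Real.abs_cos_le_one _
    have hs4 : s ^ 4 ≤ θ ^ 4 := pow_le_pow_left₀ hs0 hsθ' 4
    calc ‖2 * Real.sin (s / 2) * Real.cos (s / 2) * (s - 2 * Real.sin (s / 2))‖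
        = 2 * |Real.sin (s / 2)| * |Real.cos (s / 2)| * |s - 2 * Real.sin (s / 2)| := by
          rw [Real.norm_eq_abs, abs_mul, abs_mul, abs_mul, abs_two]
      _ ≤ 2 * (s / 2) * 1 * (37 / 768 * s ^ 3) := by gcongr
      _ ≤ θ ^ 4 := by nlinarith [pow_nonneg hs0 4]

lemma part2 :
    (fun t : ℝ => kappa1 (-1 + t) - 2 * Real.sqrt 2 / (3 * Real.pi) * t ^ ((3 : ℝ) / 2))
      =O[𝓝[>] (0 : ℝ)] fun t => t ^ ((5 : ℝ) / 2) := by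
  rw [isBigO_iff]
  refine ⟨32, ?_⟩
  have hcont : Tendsto (fun t : ℝ => Real.arccos (1 - t)) (𝓝[>] (0:ℝ)) (𝓝 0) := by
    have h : ContinuousAt (fun t : ℝ => Real.arccos (1 - t)) 0 :=
      Real.continuous_arccos.continuousAt.comp (by fun_prop)
    have := h.tendsto
    simp only [sub_zero, Real.arccos_one] at this
    exact this.mono_left nhdsWithin_le_nhds
  have hev1 : ∀ᶠ t in 𝓝[>] (0:ℝ), Real.arccos (1 - t) < 1 :=
    hcont.eventually_lt_const one_pos
  have hev2 : ∀ᶠ t in 𝓝[>] (0:ℝ), t ∈ Ioo (0:ℝ) 1 :=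
    Ioo_mem_nhdsGT_of_mem ⟨le_refl 0, one_pos⟩
  filter_upwards [hev1, hev2] with t hθ1 ht
  obtain ⟨ht0, ht1⟩ := ht
  set θ := Real.arccos (1 - t) with hθdef
  have hθ0 : 0 ≤ θ := Real.arccos_nonneg _
  have hθpi : θ ≤ Real.pi := Real.arccos_le_pi _
  have hcos : Real.cos θ = 1 - t := Real.cos_arccos (by linarith) (by linarith)
  have hsin : Real.sin θ = Real.sqrt (1 - (1 - t) ^ 2) := Real.sin_arccos _
  have hpi3 : (3:ℝ) < Real.pi := Real.pi_gt_three
  have hhalf : Real.sin (θ / 2) = Real.sqrt (t / 2) := by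
    rw [Real.sin_half_eq_sqrt hθ0 (by linarith), hcos]
    norm_num
  have hk : kappa1 (-1 + t) = (Real.sin θ - θ * Real.cos θ) / Real.pi := by
    simp only [kappa1]
    rw [show (-1 : ℝ) + t = -(1 - t) by ring, Real.arccos_neg, ← hθdef,
      show (1 : ℝ) - (-(1 - t)) ^ 2 = 1 - (1 - t) ^ 2 by ring, ← hsin, hcos]
    ring
  have hrt := Real.sqrt_nonneg t
  have hr32 : t ^ ((3 : ℝ) / 2) = Real.sqrt t ^ 3 := by
    rw [Real.sqrt_eq_rpow, ← Real.rpow_natCast (t ^ ((1:ℝ)/2)) 3, ← Real.rpow_mul ht0.le]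
    norm_num
  have hr52 : t ^ ((5 : ℝ) / 2) = Real.sqrt t ^ 5 := by
    rw [Real.sqrt_eq_rpow, ← Real.rpow_natCast (t ^ ((1:ℝ)/2)) 5, ← Real.rpow_mul ht0.le]
    norm_num
  have hs2 : Real.sqrt 2 ^ 2 = 2 := Real.sq_sqrt (by norm_num)
  have hs2ne : Real.sqrt 2 ≠ 0 := by positivity
  have hkey : 2 * Real.sqrt 2 / (3 * Real.pi) * t ^ ((3 : ℝ) / 2)
      = 8 / 3 * Real.sin (θ / 2) ^ 3 / Real.pi := by
    rw [hhalf, hr32, Real.sqrt_div ht0.le, div_pow,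
      show Real.sqrt 2 ^ 3 = 2 * Real.sqrt 2 by rw [pow_succ, hs2]]
    field_simp
    linear_combination 4 * hs2
  have hθle : θ ≤ 2 * Real.sqrt t := by
    have hcb := Real.cos_bound (x := θ) (by rw [abs_of_nonneg hθ0]; linarith)
    rw [abs_of_nonneg hθ0, abs_le, hcos] at hcb
    have hθsq : θ ^ 2 ≤ 1 := by nlinarith
    have hθ4 : θ ^ 4 ≤ θ ^ 2 := by nlinarith [sq_nonneg θ]
    have hsq : θ ^ 2 ≤ 4 * t := by nlinarith [hcb.2]
    calc θ = Real.sqrt (θ ^ 2) := (Real.sqrt_sq hθ0).symm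
      _ ≤ Real.sqrt (4 * t) := Real.sqrt_le_sqrt hsq
      _ = 2 * Real.sqrt t := by
          rw [show (4:ℝ) * t = 2 ^ 2 * t by norm_num, Real.sqrt_mul (by positivity),
            Real.sqrt_sq (by norm_num)]
  have hg := g_bound hθ0 hθ1.le
  rw [Real.norm_eq_abs, Real.norm_eq_abs, hk, hkey,
    show (Real.sin θ - θ * Real.cos θ) / Real.pi - 8 / 3 * Real.sin (θ / 2) ^ 3 / Real.pi
      = (Real.sin θ - θ * Real.cos θ - 8 / 3 * Real.sin (θ / 2) ^ 3) / Real.pi by ring,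
    abs_div, abs_of_nonneg Real.pi_pos.le, hr52,
    abs_of_nonneg (pow_nonneg (Real.sqrt_nonneg t) 5)]
  have h5 : θ ^ 5 ≤ 32 * Real.sqrt t ^ 5 := by
    calc θ ^ 5 ≤ (2 * Real.sqrt t) ^ 5 := pow_le_pow_left₀ hθ0 hθle 5
      _ = 32 * Real.sqrt t ^ 5 := by ring
  calc |Real.sin θ - θ * Real.cos θ - 8 / 3 * Real.sin (θ / 2) ^ 3| / Real.pi
      ≤ |Real.sin θ - θ * Real.cos θ - 8 / 3 * Real.sin (θ / 2) ^ 3| :=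
        div_le_self (abs_nonneg _) (by linarith)
    _ ≤ θ ^ 5 := hg
    _ ≤ 32 * Real.sqrt t ^ 5 := h5

/-- Asymptotic expansions of the degree-1 arc-cosine function `κ₁` around `±1`. -/
theorem kappa1_expansions :
    ((fun t : ℝ => kappa1 (1 - t) -
        (1 - t + 2 * Real.sqrt 2 / (3 * Real.pi) * t ^ ((3 : ℝ) / 2)))
      =O[𝓝[>] (0 : ℝ)] fun t => t ^ ((5 : ℝ) / 2)) ∧
    ((fun t : ℝ => kappa1 (-1 + t) - 2 * Real.sqrt 2 / (3 * Real.pi) * t ^ ((3 : ℝ) / 2))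
      =O[𝓝[>] (0 : ℝ)] fun t => t ^ ((5 : ℝ) / 2)) := by
  refine ⟨?_, part2⟩
  have heq : (fun t : ℝ => kappa1 (1 - t) -
      (1 - t + 2 * Real.sqrt 2 / (3 * Real.pi) * t ^ ((3 : ℝ) / 2)))
      = fun t : ℝ => kappa1 (-1 + t) - 2 * Real.sqrt 2 / (3 * Real.pi) * t ^ ((3 : ℝ) / 2) :=
    funext fun t => by rw [kappa1_symm]; ring
  rw [heq]
  exact part2
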